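/- For h > 0: I_{2,1}(h) = (1/4) h I_{0,1}(h) + (1/2) r^7, where r = sqrt((sqrt(1+4h)-1)/2), I_{2,1}(h) = 2∫_r^{√h} x^2 (h-x^2)^{1/2} dx, and I_{0,1}(h) = 2∫_r^{√h} (h-x^2)^{1/2} dx. -/

import Mathlib

open Real intervalIntegral

theorem stmt_6 (h : ℝ) (hh : 0 < h)
    (r : ℝ) (hr : r = Real.sqrt ((Real.sqrt (1 + 4 * h) - 1) / 2)) :
    (2 * ∫ x in r..(Real.sqrt h), x ^ 2 * Real.sqrt (h - x ^ 2)) =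
      (1 / 4) * h * (2 * ∫ x in r..(Real.sqrt h), Real.sqrt (h - x ^ 2)) +
        (1 / 2) * r ^ 7 := by
  have hs1 : Real.sqrt (1 + 4 * h) ^ 2 = 1 + 4 * h := Real.sq_sqrt (by linarith)
  have hr0 : 0 ≤ r := hr ▸ Real.sqrt_nonneg _
  have hr2 : r ^ 2 = (Real.sqrt (1 + 4 * h) - 1) / 2 := by
    rw [hr]; exact Real.sq_sqrt (by nlinarith [Real.sqrt_nonneg (1 + 4 * h)])
  have hkey : r ^ 2 + r ^ 4 = h := by nlinarith [hr2, hs1]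
  have hsh : Real.sqrt h ^ 2 = h := Real.sq_sqrt hh.le
  have hrh : r ≤ Real.sqrt h := by
    rw [show r = Real.sqrt (r ^ 2) from (Real.sqrt_sq hr0).symm]
    apply Real.sqrt_le_sqrt; nlinarith [sq_nonneg (r ^ 2)]
  -- continuity facts
  have hc1 : Continuous fun x : ℝ => Real.sqrt (h - x ^ 2) :=
    (continuous_const.sub (continuous_pow 2)).sqrt
  have hc2 : Continuous fun x : ℝ => x ^ 2 * Real.sqrt (h - x ^ 2) :=
    (continuous_pow 2).mul hc1
  have hc3 : Continuous fun x : ℝ =>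
      h * Real.sqrt (h - x ^ 2) - 4 * (x ^ 2 * Real.sqrt (h - x ^ 2)) :=
    (continuous_const.mul hc1).sub (continuous_const.mul hc2)
  -- FTC
  have ftc : (∫ x in r..(Real.sqrt h),
      (h * Real.sqrt (h - x ^ 2) - 4 * (x ^ 2 * Real.sqrt (h - x ^ 2)))) =
      (fun x => x * ((h - x ^ 2) * Real.sqrt (h - x ^ 2))) (Real.sqrt h) -
      (fun x => x * ((h - x ^ 2) * Real.sqrt (h - x ^ 2))) r := by
    apply intervalIntegral.integral_eq_sub_of_hasDerivAt_of_le
      (f := fun x => x * ((h - x ^ 2) * Real.sqrt (h - x ^ 2)))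
      (f' := fun x => h * Real.sqrt (h - x ^ 2) - 4 * (x ^ 2 * Real.sqrt (h - x ^ 2))) hrh
    · exact (continuous_id.mul ((continuous_const.sub (continuous_pow 2)).mul hc1)).continuousOn
    · intro x hx
      have hx0 : 0 ≤ x := le_trans hr0 hx.1.le
      have hu0 : 0 < h - x ^ 2 := by nlinarith [hx.2, Real.sqrt_nonneg h]
      have hu : HasDerivAt (fun x : ℝ => h - x ^ 2) (-(2 * x)) x := by
        simpa using ((hasDerivAt_pow 2 x).const_sub h)
      have hsq : HasDerivAt (fun x : ℝ => Real.sqrt (h - x ^ 2))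
          (1 / (2 * Real.sqrt (h - x ^ 2)) * (-(2 * x))) x :=
        (Real.hasDerivAt_sqrt hu0.ne').comp x hu
      have hprod := (hasDerivAt_id' x).fun_mul (hu.fun_mul hsq)
      refine hprod.congr_deriv ?_
      have hsqpos : 0 < Real.sqrt (h - x ^ 2) := Real.sqrt_pos.mpr hu0
      have hsq2 : Real.sqrt (h - x ^ 2) ^ 2 = h - x ^ 2 := Real.sq_sqrt hu0.le
      field_simp
      nlinarith [hsq2, hsqpos]
    · exact hc3.intervalIntegrable _ _
  have hhr2 : h - r ^ 2 = r ^ 4 := by linarith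
  have hsqr : Real.sqrt (h - r ^ 2) = r ^ 2 := by
    rw [hhr2, show r ^ 4 = (r ^ 2) ^ 2 by ring, Real.sqrt_sq (sq_nonneg r)]
  have hend : Real.sqrt h * ((h - Real.sqrt h ^ 2) * Real.sqrt (h - Real.sqrt h ^ 2)) = 0 := by
    rw [hsh]; simp
  have ftc' : (∫ x in r..(Real.sqrt h),
      (h * Real.sqrt (h - x ^ 2) - 4 * (x ^ 2 * Real.sqrt (h - x ^ 2)))) = -(r ^ 7) := by
    rw [ftc]; simp only
    rw [hend, hsqr, hhr2]; ring
  have hsplit : (∫ x in r..(Real.sqrt h),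
      (h * Real.sqrt (h - x ^ 2) - 4 * (x ^ 2 * Real.sqrt (h - x ^ 2)))) =
      h * (∫ x in r..(Real.sqrt h), Real.sqrt (h - x ^ 2)) -
      4 * (∫ x in r..(Real.sqrt h), x ^ 2 * Real.sqrt (h - x ^ 2)) := by
    rw [intervalIntegral.integral_sub ((continuous_const.fun_mul hc1).intervalIntegrable _ _)
      ((continuous_const.fun_mul hc2).intervalIntegrable _ _),
      intervalIntegral.integral_const_mul, intervalIntegral.integral_const_mul]
  rw [hsplit] at ftc'
  linarith
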